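/- For every i ≥ 1, |v_i|/|u_i| ≤ n_{i-1}/l_{i-1}, where u_0 = 0, v_0 = 1, u_{i+1} = u_i^{m_i} v_i^{l_i}, v_{i+1} = u_i^{m_i} v_i^{n_i}. -/

import Mathlib

/-- The `k`-th power of a finite word `w` (concatenation of `k` copies). -/
def wpow (w : List Bool) (k : ℕ) : List Bool := (List.replicate k w).flatten

/-- The pair of words `(u_i, v_i)`:  `u_0 = 0`, `v_0 = 1`,
`u_{i+1} = u_i^{m_i} v_i^{l_i}`, `v_{i+1} = u_i^{m_i} v_i^{n_i}`. -/
def uvSeq (l m n : ℕ → ℕ) : ℕ → List Bool × List Bool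
  | 0 => ([false], [true])
  | i + 1 =>
      (wpow (uvSeq l m n i).1 (m i) ++ wpow (uvSeq l m n i).2 (l i),
       wpow (uvSeq l m n i).1 (m i) ++ wpow (uvSeq l m n i).2 (n i))

/-- The substitution `σ_h` : `0 ↦ 0^{m_h} 1^{l_h}`, `1 ↦ 0^{m_h} 1^{n_h}`. -/
def subw (l m n : ℕ → ℕ) (h : ℕ) (w : List Bool) : List Bool :=
  w.flatMap fun c => List.replicate (m h) false ++ List.replicate (if c then n h else l h) true

/-- `wordIter i h = σ_h σ_{h+1} ⋯ σ_{h+i-1}(0)`. -/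
def wordIter (l m n : ℕ → ℕ) : ℕ → ℕ → List Bool
  | 0, _ => [false]
  | i + 1, h => subw l m n h (wordIter l m n i (h + 1))

/-- The infinite word `u^{(h)} = lim_i σ_h ⋯ σ_{h+i-1}(0)`. -/
def limWord (l m n : ℕ → ℕ) (h : ℕ) (k : ℕ) : Bool :=
  (wordIter l m n (k + 1) h).getD k false

/-- `w` is a factor of the infinite word `U`. -/
def IsFactor (U : ℕ → Bool) (w : List Bool) : Prop :=
  ∃ k, w = (List.range w.length).map fun j => U (k + j)

/-- `σ_0 σ_1 ⋯ σ_{h+i-1}` starting at `h`, applied to `w`. -/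
def subComp (l m n : ℕ → ℕ) : ℕ → ℕ → List Bool → List Bool
  | 0, _, w => w
  | i + 1, h, w => subw l m n h (subComp l m n i (h + 1) w)

/-- `\hat{σ}_h(w) = 1^{l_h} σ_h(w) 0^{m_h} 1^{l_h}`. -/
def hatw (l m n : ℕ → ℕ) (h : ℕ) (w : List Bool) : List Bool :=
  List.replicate (l h) true ++ subw l m n h w ++
    List.replicate (m h) false ++ List.replicate (l h) true

/-- `hatComp i h w = \hat{σ}_h ⋯ \hat{σ}_{h+i-1}(w)`. -/
def hatComp (l m n : ℕ → ℕ) : ℕ → ℕ → List Bool → List Bool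
  | 0, _, w => w
  | i + 1, h, w => hatw l m n h (hatComp l m n i (h + 1) w)

/-- The complexity function of the infinite word `U`. -/
noncomputable def complexityFn (U : ℕ → Bool) (nn : ℕ) : ℕ :=
  Set.ncard {w : List Bool | w.length = nn ∧ IsFactor U w}

lemma wpow_length (w : List Bool) (k : ℕ) : (wpow w k).length = k * w.length := by
  simp [wpow]

lemma uvSeq_pos (l m n : ℕ → ℕ) (hlpos : ∀ i, 0 < l i) (hlm : ∀ i, l i < m i) (i : ℕ) :
    0 < (uvSeq l m n i).1.length ∧ 0 < (uvSeq l m n i).2.length := by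
  induction i with
  | zero => simp [uvSeq]
  | succ j ih =>
      have hm : 0 < m j := (hlpos j).trans (hlm j)
      constructor <;>
      · simp [uvSeq, wpow_length]
        exact Or.inl ⟨hm, ih.1⟩

theorem stmt2 (l m n : ℕ → ℕ) (hlmono : StrictMono l) (hmmono : StrictMono m)
    (hnmono : StrictMono n) (hlpos : ∀ i, 0 < l i)
    (hlm : ∀ i, l i < m i) (hmn : ∀ i, m i < n i) (i : ℕ) (hi : 1 ≤ i) :
    ((uvSeq l m n i).2.length : ℝ) / ((uvSeq l m n i).1.length : ℝ)
      ≤ (n (i - 1) : ℝ) / (l (i - 1) : ℝ) := by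
  obtain ⟨j, rfl⟩ := Nat.exists_eq_add_of_le hi
  simp only [Nat.add_sub_cancel_left] at *
  rw [Nat.add_comm]
  obtain ⟨ha, hb⟩ := uvSeq_pos l m n hlpos hlm j
  set a := (uvSeq l m n j).1.length with hadef
  set b := (uvSeq l m n j).2.length with hbdef
  have hun : (uvSeq l m n (j+1)).1.length = m j * a + l j * b := by
    simp [uvSeq, wpow_length, hadef, hbdef]
  have hvn : (uvSeq l m n (j+1)).2.length = m j * a + n j * b := by
    simp [uvSeq, wpow_length, hadef, hbdef]
  rw [hun, hvn]
  have hl := hlpos j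
  have hln : l j ≤ n j := le_of_lt ((hlm j).trans (hmn j))
  have hm : 0 < m j := hl.trans (hlm j)
  rw [div_le_div_iff₀ (by positivity) (by exact_mod_cast hl)]
  push_cast
  nlinarith [mul_le_mul_of_nonneg_right (show (l j:ℝ) ≤ n j by exact_mod_cast hln)
      (show (0:ℝ) ≤ (m j:ℝ) * a by positivity),
    (show (0:ℝ) < a by exact_mod_cast ha), (show (0:ℝ) < b by exact_mod_cast hb),
    (show (0:ℝ) < l j by exact_mod_cast hl),
    (show (0:ℝ) < m j by exact_mod_cast (hlpos j).trans (hlm j))]
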